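/- arXiv:2007.00353 — 4 statements merged into one kernel-verified Lean document; each statement's English description precedes it below -/
import Mathlib

section
/- Let λ, σ > 0 and for k, ξ ∈ ℝ^d set ξ(r) = (ξ − k/λ)e^{−λr} + k/λ. Then with c = 1 − √3/2 one has, for all t ≥ 0 and all k, ξ ∈ ℝ^d: exp(−(σ²/2)∫₀^t |ξ(r)|² dr) ≤ exp( −c(σ²/2)·( |k|² ∫₀^t ((1−e^{−λr})/λ)² dr + |ξ|² ∫₀^t e^{−2λr} dr ) ). -/
open Real MeasureTheory

open RealInnerProductSpace in
lemma int_exp_mul (c : ℝ) (hc : c ≠ 0) (t : ℝ) :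
    ∫ r in (0:ℝ)..t, Real.exp (c*r) = (Real.exp (c*t) - 1)/c := by
  have h : ∀ x ∈ Set.uIcc (0:ℝ) t, HasDerivAt (fun y => Real.exp (c*y)/c) (Real.exp (c*x)) x := by
    intro x _
    have h1 : HasDerivAt (fun y : ℝ => c*y) c x := by
      simpa using (hasDerivAt_id x).const_mul c
    have h3 := ((Real.hasDerivAt_exp (c*x)).comp x h1).div_const c
    refine h3.congr_deriv ?_
    field_simp
  rw [intervalIntegral.integral_eq_sub_of_hasDerivAt h
    ((Real.continuous_exp.comp (continuous_const.mul continuous_id)).intervalIntegrable 0 t)]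
  simp [mul_comm]
  ring

lemma int_affine (c0 c1 c2 lam : ℝ) (hlam : 0 < lam) (t : ℝ) :
    ∫ r in (0:ℝ)..t, (c0 + c1 * Real.exp (-lam*r) + c2 * Real.exp (-2*lam*r))
      = c0*t + c1*(1-Real.exp (-lam*t))/lam + c2*(1-Real.exp (-2*lam*t))/(2*lam) := by
  have e1 : Continuous fun r : ℝ => Real.exp (-lam*r) :=
    Real.continuous_exp.comp (continuous_const.mul continuous_id)
  have e2 : Continuous fun r : ℝ => Real.exp (-2*lam*r) :=
    Real.continuous_exp.comp (continuous_const.mul continuous_id)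
  rw [intervalIntegral.integral_add (f := fun r => c0 + c1 * Real.exp (-lam*r)) (g := fun r => c2 * Real.exp (-2*lam*r)) (((continuous_const.add (continuous_const.mul e1))).intervalIntegrable 0 t)
      ((continuous_const.mul e2).intervalIntegrable 0 t),
    intervalIntegral.integral_add (f := fun _ => c0) (g := fun r => c1 * Real.exp (-lam*r)) ((continuous_const (y:=c0)).intervalIntegrable 0 t)
      ((continuous_const.mul e1).intervalIntegrable 0 t),
    intervalIntegral.integral_const, intervalIntegral.integral_const_mul,
    intervalIntegral.integral_const_mul, int_exp_mul (-lam) (by linarith) t,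
    int_exp_mul (-2*lam) (by linarith) t]
  have d1 : ∀ a : ℝ, (a - 1)/(-lam) = (1-a)/lam := by
    intro a; rw [div_neg]; ring
  have d2 : ∀ a : ℝ, (a - 1)/(-2*lam) = (1-a)/(2*lam) := by
    intro a; rw [show (-2*lam) = -(2*lam) by ring, div_neg]; ring
  rw [d1, d2, smul_eq_mul]; ring

lemma log_poly_bound (s : ℝ) (hs0 : 0 < s) (hs1 : s ≤ 1) :
    (1-s) + (1-s)^2/2 + (1-s)^3/3 + (1-s)^4/4 + (1-s)^5/5 ≤ -Real.log s := by
  set F : ℝ → ℝ := fun x => -Real.log x -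
    ((1-x) + (1-x)^2/2 + (1-x)^3/3 + (1-x)^4/4 + (1-x)^5/5) with hF
  have hFd : ∀ x ∈ Set.Ioo (0:ℝ) 1, HasDerivAt F (-((1-x)^5/x)) x := by
    intro x hx
    obtain ⟨hx0, hx1⟩ := hx
    have h1 : HasDerivAt (fun y : ℝ => 1 - y) (-1) x := by
      simpa using (hasDerivAt_id x).const_sub 1
    have hpoly : HasDerivAt (fun y : ℝ =>
        (1-y) + (1-y)^2/2 + (1-y)^3/3 + (1-y)^4/4 + (1-y)^5/5)
        (-1 + (2*(1-x)^1*(-1))/2 + (3*(1-x)^2*(-1))/3 + (4*(1-x)^3*(-1))/4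
          + (5*(1-x)^4*(-1))/5) x :=
      (((h1.add ((h1.pow 2).div_const 2)).add ((h1.pow 3).div_const 3)).add
        ((h1.pow 4).div_const 4)).add ((h1.pow 5).div_const 5)
    have hlog : HasDerivAt (fun y : ℝ => -Real.log y) (-x⁻¹) x :=
      (Real.hasDerivAt_log hx0.ne').neg
    have hFd' := hlog.sub hpoly
    refine hFd'.congr_deriv ?_
    field_simp
    ring
  have hder : ∀ x ∈ interior (Set.Ioc (0:ℝ) 1), deriv F x ≤ 0 := by
    intro x hx
    rw [interior_Ioc] at hx
    rw [(hFd x hx).deriv]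
    have h5 : (0:ℝ) ≤ (1-x)^5 := pow_nonneg (by linarith [hx.2]) 5
    have := div_nonneg h5 hx.1.le
    linarith
  have hdiff : DifferentiableOn ℝ F (interior (Set.Ioc (0:ℝ) 1)) := by
    intro x hx
    rw [interior_Ioc] at hx
    exact ((hFd x hx).differentiableAt).differentiableWithinAt
  have hcont : ContinuousOn F (Set.Ioc (0:ℝ) 1) := by
    apply ContinuousOn.sub
    · exact (Real.continuousOn_log.mono (by
        intro x hx
        simp only [Set.mem_compl_iff, Set.mem_singleton_iff]
        exact ne_of_gt hx.1)).neg
    · exact Continuous.continuousOn (by continuity)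
  have hanti : AntitoneOn F (Set.Ioc (0:ℝ) 1) :=
    antitoneOn_of_deriv_nonpos (convex_Ioc 0 1) hcont hdiff hder
  have h01 : s ∈ Set.Ioc (0:ℝ) 1 := ⟨hs0, hs1⟩
  have h11 : (1:ℝ) ∈ Set.Ioc (0:ℝ) 1 := ⟨one_pos, le_refl 1⟩
  have := hanti h01 h11 hs1
  have hF1 : F 1 = 0 := by simp [hF]
  rw [hF1] at this
  simp only [hF] at this
  linarith

open RealInnerProductSpace

set_option maxHeartbeats 1000000 in
/-- hypoelliptic Schauder-type bound
`exp(-(σ²/2)∫₀^t |ξ(r)|² dr) ≤ exp(-c(σ²/2)(|k|²∫₀^t((1-e^{-λr})/λ)²dr + |ξ|²∫₀^t e^{-2λr}dr))`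
with `c = 1 - √3/2`, where `ξ(r) = (ξ - k/λ)e^{-λr} + k/λ`. -/
theorem stmt_7 (d : ℕ) (lam sig : ℝ) (hlam : 0 < lam) (hsig : 0 < sig)
    (k ξ : EuclideanSpace ℝ (Fin d)) (t : ℝ) (ht : 0 ≤ t)
    (Ξ : ℝ → EuclideanSpace ℝ (Fin d))
    (hΞ : ∀ r, Ξ r = Real.exp (-lam * r) • (ξ - lam⁻¹ • k) + lam⁻¹ • k) :
    Real.exp (-(sig ^ 2 / 2) * ∫ r in (0:ℝ)..t, ‖Ξ r‖ ^ 2)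
      ≤ Real.exp (-((1 - Real.sqrt 3 / 2) * (sig ^ 2 / 2)) *
          (‖k‖ ^ 2 * (∫ r in (0:ℝ)..t, ((1 - Real.exp (-lam * r)) / lam) ^ 2)
            + ‖ξ‖ ^ 2 * ∫ r in (0:ℝ)..t, Real.exp (-2 * lam * r))) := by
  have hl : lam ≠ 0 := hlam.ne'
  set X := ‖ξ‖ with hX
  set Y := ‖k‖ with hY
  set Z : ℝ := ⟪ξ, k⟫ with hZdef
  set s := Real.exp (-lam*t) with hs
  have hs0 : 0 < s := Real.exp_pos _
  have hs1 : s ≤ 1 := by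
    rw [hs, show (1:ℝ) = Real.exp 0 by simp]
    exact Real.exp_le_exp.mpr (by nlinarith)
  have hlogs : Real.log s = -lam*t := Real.log_exp _
  have hL : (1-s) + (1-s)^2/2 + (1-s)^3/3 + (1-s)^4/4 + (1-s)^5/5 ≤ lam*t := by
    have := log_poly_bound s hs0 hs1
    rw [hlogs] at this
    linarith
  have hv0 : (0:ℝ) ≤ 1 - s := by linarith
  have hexp2t : Real.exp (-2*lam*t) = s^2 := by
    rw [hs, sq, ← Real.exp_add]; ring_nf
  -- the three integrals
  have hIa : (∫ r in (0:ℝ)..t, Real.exp (-2*lam*r)) = (1-s^2)/(2*lam) := by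
    rw [int_exp_mul (-2*lam) (by linarith) t, hexp2t,
      show (-2*lam) = -(2*lam) by ring, div_neg]
    ring
  have hIbexp : ∀ r : ℝ, ((1-Real.exp (-lam*r))/lam)^2
      = 1/lam^2 + (-2/lam^2)*Real.exp (-lam*r) + (1/lam^2)*Real.exp (-2*lam*r) := by
    intro r
    have h2 : Real.exp (-2*lam*r) = Real.exp (-lam*r)^2 := by
      rw [sq, ← Real.exp_add]; ring_nf
    rw [h2]; field_simp; ring
  have hIb : (∫ r in (0:ℝ)..t, ((1-Real.exp (-lam*r))/lam)^2)
      = (lam*t - 2*(1-s) + (1-s^2)/2)/lam^3 := by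
    simp only [hIbexp]
    rw [int_affine _ _ _ _ hlam t, hexp2t, ← hs]
    field_simp
    ring
  have hnorm : ∀ r : ℝ, ‖Ξ r‖^2 = Y^2/lam^2 + (2*Z/lam - 2*Y^2/lam^2)*Real.exp (-lam*r)
      + (X^2 - 2*Z/lam + Y^2/lam^2)*Real.exp (-2*lam*r) := by
    intro r
    have h2 : Real.exp (-2*lam*r) = Real.exp (-lam*r)^2 := by
      rw [sq, ← Real.exp_add]; ring_nf
    have ha : Ξ r = Real.exp (-lam*r) • ξ + ((1 - Real.exp (-lam*r))/lam) • k := by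
      rw [hΞ r]; module
    rw [ha, norm_add_sq_real, norm_smul, norm_smul, real_inner_smul_left,
      real_inner_smul_right, h2]
    simp only [Real.norm_eq_abs, mul_pow, sq_abs, ← hX, ← hY, ← hZdef]
    field_simp
    ring
  have hI : (∫ r in (0:ℝ)..t, ‖Ξ r‖^2)
      = X^2*((1-s^2)/(2*lam)) + 2*Z*((1-s)^2/(2*lam^2))
        + Y^2*((lam*t - 2*(1-s) + (1-s^2)/2)/lam^3) := by
    simp only [hnorm]
    rw [int_affine _ _ _ _ hlam t, hexp2t, ← hs]
    field_simp
    ring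
  -- nonnegativity and the key polynomial inequality
  have hIa0 : 0 ≤ (1-s^2)/(2*lam) := div_nonneg (by nlinarith) (by linarith)
  have hIab0 : 0 ≤ (1-s)^2/(2*lam^2) := by positivity
  have hbr : (1-s)^3/3 + (1-s)^4/4 + (1-s)^5/5 ≤ lam*t - 2*(1-s) + (1-s^2)/2 := by
    nlinarith [hL]
  have hIb0 : 0 ≤ (lam*t - 2*(1-s) + (1-s^2)/2)/lam^3 := by
    apply div_nonneg _ (by positivity)
    nlinarith [pow_nonneg hv0 3, pow_nonneg hv0 4, pow_nonneg hv0 5, hbr]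
  have hstep1 : (1-s)^4 ≤ (3/2)*(1-s^2)*((1-s)^3/3+(1-s)^4/4+(1-s)^5/5) := by
    linarith [mul_nonneg (mul_nonneg (pow_nonneg hv0 6) hs0.le) (by norm_num : (0:ℝ) ≤ 1),
      mul_nonneg (pow_nonneg hv0 6) hs0.le, mul_nonneg (pow_nonneg hv0 5) hs0.le,
      pow_nonneg hv0 5]
  have hstep2 : (3/2)*(1-s^2)*((1-s)^3/3+(1-s)^4/4+(1-s)^5/5)
      ≤ (3/2)*(1-s^2)*(lam*t - 2*(1-s) + (1-s^2)/2) :=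
    mul_le_mul_of_nonneg_left hbr (by nlinarith)
  have hkeypoly : (1-s)^4 ≤ (3/2)*(1-s^2)*(lam*t - 2*(1-s) + (1-s^2)/2) :=
    le_trans hstep1 hstep2
  have hkey : 4*((1-s)^2/(2*lam^2))^2
      ≤ 3*((1-s^2)/(2*lam))*((lam*t - 2*(1-s) + (1-s^2)/2)/lam^3) := by
    have lhs_eq : 4*((1-s)^2/(2*lam^2))^2 = (1-s)^4/lam^4 := by
      field_simp; ring
    have rhs_eq : 3*((1-s^2)/(2*lam))*((lam*t - 2*(1-s) + (1-s^2)/2)/lam^3)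
        = ((3/2)*(1-s^2)*(lam*t - 2*(1-s) + (1-s^2)/2))/lam^4 := by
      rw [eq_div_iff (by positivity : (lam:ℝ)^4 ≠ 0)]
      field_simp
    rw [lhs_eq, rhs_eq]
    gcongr
  -- square roots
  set u := Real.sqrt ((1-s^2)/(2*lam)) with hu'
  set v := Real.sqrt ((lam*t - 2*(1-s) + (1-s^2)/2)/lam^3) with hv'
  have hu0 : 0 ≤ u := Real.sqrt_nonneg _
  have hv0' : 0 ≤ v := Real.sqrt_nonneg _
  have hueq : (1-s^2)/(2*lam) = u^2 := (Real.sq_sqrt hIa0).symm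
  have hveq : (lam*t - 2*(1-s) + (1-s^2)/2)/lam^3 = v^2 := (Real.sq_sqrt hIb0).symm
  rw [hueq, hveq] at hkey
  have hsqrt3 : (0:ℝ) ≤ Real.sqrt 3 := Real.sqrt_nonneg 3
  have hsqrt : 2*((1-s)^2/(2*lam^2)) ≤ Real.sqrt 3 * (u*v) := by
    have h2I : (0:ℝ) ≤ 2*((1-s)^2/(2*lam^2)) := by positivity
    have hrhs0 : (0:ℝ) ≤ Real.sqrt 3 * (u*v) := by positivity
    have hsq : (2*((1-s)^2/(2*lam^2)))^2 ≤ (Real.sqrt 3 * (u*v))^2 := by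
      have : (Real.sqrt 3 * (u*v))^2 = 3*(u^2*v^2) := by
        rw [mul_pow, Real.sq_sqrt (by norm_num : (0:ℝ) ≤ 3), mul_pow]
      rw [this]
      nlinarith [hkey]
    calc 2*((1-s)^2/(2*lam^2)) = Real.sqrt ((2*((1-s)^2/(2*lam^2)))^2) :=
          (Real.sqrt_sq h2I).symm
      _ ≤ Real.sqrt ((Real.sqrt 3 * (u*v))^2) := Real.sqrt_le_sqrt hsq
      _ = Real.sqrt 3 * (u*v) := Real.sqrt_sq hrhs0
  -- inner product bound
  have hX0 : 0 ≤ X := norm_nonneg _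
  have hY0 : 0 ≤ Y := norm_nonneg _
  have hZbound : -(X*Y) ≤ Z := by
    have h1 := abs_real_inner_le_norm ξ k
    have h2 := neg_abs_le (⟪ξ, k⟫ : ℝ)
    linarith
  -- main inequality
  have hmain : (1 - Real.sqrt 3/2)*(Y^2*v^2 + X^2*u^2)
      ≤ X^2*u^2 + 2*Z*((1-s)^2/(2*lam^2)) + Y^2*v^2 := by
    nlinarith [mul_nonneg (mul_nonneg hX0 hY0) (sub_nonneg.mpr hsqrt),
      mul_nonneg hsqrt3 (sq_nonneg (X*u - Y*v)),
      mul_nonneg (by linarith : (0:ℝ) ≤ Z + X*Y) hIab0]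
  rw [Real.exp_le_exp, hI, hIa, hIb, hueq, hveq]
  have hsig2 : (0:ℝ) ≤ sig^2/2 := by positivity
  have := mul_le_mul_of_nonneg_left hmain hsig2
  nlinarith [this]
end

section
/- Let λ, σ > 0 and for k, ξ ∈ ℝ^d set ξ(r) = (ξ − k/λ)e^{−λr} + k/λ. For every integer n ≥ 0 there is a constant C_n (depending on n and λ but not on σ, t, k, ξ) such that for all t > 0 and all k, ξ ∈ ℝ^d: |ξ(t)| · ( ∫₀^t |ξ(r)| dr )^n · exp( −(σ²/2)∫₀^t |ξ(r)|² dr ) ≤ C_n · t^{(n−1)/2} / σ^{n+1}. -/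
open Real MeasureTheory


/-- Averaging lemma: if `Nv ≤ 2 f r1 + 8 f r2` for all `r1` in the first third
and `r2` in the last third, then `t * Nv ≤ 24 ∫₀ᵗ f`. -/
lemma aux_avg (f : ℝ → ℝ) (hf : Continuous f) (hfnn : ∀ x, 0 ≤ f x)
    (t : ℝ) (ht : 0 < t) (Nv : ℝ)
    (hpt : ∀ r1 ∈ Set.Icc (0:ℝ) (t/3), ∀ r2 ∈ Set.Icc (2*t/3) t,
      Nv ≤ 2 * f r1 + 8 * f r2) :
    t * Nv ≤ 24 * ∫ r in (0:ℝ)..t, f r := by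
  have hint : ∀ a b : ℝ, IntervalIntegrable f volume a b := fun a b => hf.intervalIntegrable a b
  set J1 := ∫ r in (0:ℝ)..(t/3), f r with hJ1def
  set Jm := ∫ r in (t/3)..(2*t/3), f r with hJmdef
  set J2 := ∫ r in (2*t/3)..t, f r with hJ2def
  have hJ1 : 0 ≤ J1 := intervalIntegral.integral_nonneg (by linarith) (fun x _ => hfnn x)
  have hJm : 0 ≤ Jm := intervalIntegral.integral_nonneg (by linarith) (fun x _ => hfnn x)
  have hJ2 : 0 ≤ J2 := intervalIntegral.integral_nonneg (by linarith) (fun x _ => hfnn x)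
  have hsplit : J1 + Jm + J2 = ∫ r in (0:ℝ)..t, f r := by
    rw [hJ1def, hJmdef, hJ2def,
      intervalIntegral.integral_add_adjacent_intervals (hint _ _) (hint _ _),
      intervalIntegral.integral_add_adjacent_intervals (hint _ _) (hint _ _)]
  have stepA : ∀ r2 ∈ Set.Icc (2*t/3) t, (t/3) * Nv ≤ 2 * J1 + (t/3) * (8 * f r2) := by
    intro r2 hr2
    have hmono := intervalIntegral.integral_mono_on (by linarith : (0:ℝ) ≤ t/3)
      (intervalIntegrable_const (μ := volume) (c := Nv))
      (((hint 0 (t/3)).const_mul 2).add (intervalIntegrable_const (μ := volume) (c := 8 * f r2)))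
      (fun r1 hr1 => hpt r1 hr1 r2 hr2)
    rw [intervalIntegral.integral_const, intervalIntegral.integral_add
        ((hint 0 (t/3)).const_mul 2) (intervalIntegrable_const (μ := volume) (c := 8 * f r2)),
      intervalIntegral.integral_const_mul, intervalIntegral.integral_const] at hmono
    simp only [smul_eq_mul, sub_zero] at hmono
    linarith
  have stepB : (t/3) * ((t/3) * Nv) ≤ (t/3) * (2 * J1) + ((t/3) * 8) * J2 := by
    have hmono := intervalIntegral.integral_mono_on (by linarith : 2*t/3 ≤ t)
      (intervalIntegrable_const (μ := volume) (c := (t/3) * Nv))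
      ((intervalIntegrable_const (μ := volume) (c := 2 * J1)).add ((hint (2*t/3) t).const_mul ((t/3) * 8)))
      (fun r2 hr2 => by
        have h := stepA r2 hr2
        have : (t/3) * Nv ≤ 2 * J1 + (t/3) * 8 * f r2 := by linarith [h]
        simpa [mul_assoc] using this)
    rw [intervalIntegral.integral_const, intervalIntegral.integral_add
        (intervalIntegrable_const (μ := volume) (c := 2 * J1)) ((hint (2*t/3) t).const_mul ((t/3) * 8)),
      intervalIntegral.integral_const_mul, intervalIntegral.integral_const] at hmono
    simp only [intervalIntegral.integral_const_mul, smul_eq_mul] at hmono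
    have h23 : t - 2*t/3 = t/3 := by ring
    rw [h23] at hmono
    nlinarith [hmono]
  have ht3 : (0:ℝ) < t/3 := by linarith
  have h8 : (t/3) * Nv ≤ 2 * J1 + 8 * J2 := by
    have h9 : (t/3) * ((t/3) * Nv) ≤ (t/3) * (2 * J1 + 8 * J2) := by nlinarith [stepB]
    exact le_of_mul_le_mul_left h9 ht3
  nlinarith [h8, hJ1, hJm, hJ2, hsplit]

/-- Cauchy–Schwarz for interval integrals of nonnegative continuous functions. -/
lemma aux_cs (f : ℝ → ℝ) (hf : Continuous f) (hfnn : ∀ x, 0 ≤ f x)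
    (t : ℝ) (ht : 0 < t) :
    (∫ r in (0:ℝ)..t, f r)^2 ≤ t * ∫ r in (0:ℝ)..t, (f r)^2 := by
  set I1 := ∫ r in (0:ℝ)..t, f r with hI1def
  set I2 := ∫ r in (0:ℝ)..t, (f r)^2 with hI2def
  have hI1nn : 0 ≤ I1 := intervalIntegral.integral_nonneg ht.le (fun x _ => hfnn x)
  have hI2nn : 0 ≤ I2 := intervalIntegral.integral_nonneg ht.le (fun x _ => sq_nonneg _)
  rcases eq_or_lt_of_le hI2nn with h0 | hI2pos
  · -- I2 = 0 : then for every ε>0, 2ε I1 ≤ tε², so I1 = 0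
    have hb : ∀ ε : ℝ, 0 < ε → 2*ε*I1 ≤ t*ε^2 + I2 := by
      intro ε hε
      have hmono := intervalIntegral.integral_mono_on ht.le
        ((hf.intervalIntegrable 0 t).const_mul (2*ε))
        ((intervalIntegrable_const (μ := volume) (c := ε^2)).add ((hf.pow 2).intervalIntegrable 0 t))
        (fun r _ => by simp only [Pi.pow_apply]; nlinarith [sq_nonneg (ε - f r)])
      rw [intervalIntegral.integral_const_mul, intervalIntegral.integral_add
          (intervalIntegrable_const (μ := volume) (c := ε^2)) ((hf.pow 2).intervalIntegrable 0 t),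
        intervalIntegral.integral_const] at hmono
      simp only [smul_eq_mul, sub_zero, Pi.pow_apply] at hmono
      linarith [hmono]
    have hI10 : I1 = 0 := by
      by_contra hne
      have hI1pos : 0 < I1 := lt_of_le_of_ne hI1nn (Ne.symm hne)
      have h2 := hb (I1/t) (by positivity)
      have hrw : t*(I1/t)^2 = (I1/t)*I1 := by field_simp
      have hq : 0 < (I1/t)*I1 := by positivity
      rw [hrw] at h2
      linarith [h2]
    rw [hI10, ← h0]
    nlinarith
  · have hb : 2*Real.sqrt (I2/t)*I1 ≤ t*(Real.sqrt (I2/t))^2 + I2 := by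
      have hmono := intervalIntegral.integral_mono_on ht.le
        ((hf.intervalIntegrable 0 t).const_mul (2*Real.sqrt (I2/t)))
        ((intervalIntegrable_const (μ := volume) (c := (Real.sqrt (I2/t))^2)).add ((hf.pow 2).intervalIntegrable 0 t))
        (fun r _ => by simp only [Pi.pow_apply]; nlinarith [sq_nonneg (Real.sqrt (I2/t) - f r)])
      rw [intervalIntegral.integral_const_mul, intervalIntegral.integral_add
          (intervalIntegrable_const (μ := volume) (c := (Real.sqrt (I2/t))^2)) ((hf.pow 2).intervalIntegrable 0 t),
        intervalIntegral.integral_const] at hmono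
      simp only [smul_eq_mul, sub_zero, Pi.pow_apply] at hmono
      linarith [hmono]
    have hεsq : (Real.sqrt (I2/t))^2 = I2/t := Real.sq_sqrt (by positivity)
    have hεpos : 0 < Real.sqrt (I2/t) := Real.sqrt_pos.mpr (by positivity)
    have h10 : 2 * Real.sqrt (I2/t) * I1 ≤ 2*I2 := by
      have : t * (Real.sqrt (I2/t))^2 = I2 := by rw [hεsq]; field_simp
      linarith [hb]
    have h11 : Real.sqrt (I2/t) * I1 ≤ I2 := by linarith
    have h12 : (Real.sqrt (I2/t)*I1)^2 ≤ I2^2 := by nlinarith [mul_nonneg hεpos.le hI1nn]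
    have h13 : (I2/t) * I1^2 ≤ I2^2 := by rw [← hεsq]; nlinarith [h12]
    have h14 : I2 * I1^2 ≤ I2 * (t * I2) := by
      have h15 := mul_le_mul_of_nonneg_left h13 ht.le
      calc I2 * I1^2 = t * ((I2/t) * I1^2) := by field_simp
        _ ≤ t * I2^2 := by linarith [h15]
        _ = I2 * (t*I2) := by ring
    exact le_of_mul_le_mul_left h14 hI2pos


lemma aux_pow_mul_exp_neg_le (m : ℕ) (z : ℝ) (hz : 0 ≤ z) :
    z ^ m * Real.exp (-z) ≤ (m : ℝ) ^ m := by
  rcases Nat.eq_zero_or_pos m with hm | hm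
  · subst hm; simpa using Real.exp_le_one_iff.mpr (neg_nonpos.mpr hz)
  have hmpos : (0:ℝ) < m := by exact_mod_cast hm
  have h1 : z / m ≤ Real.exp (z / m) := by
    have := Real.add_one_le_exp (z / m); linarith
  have h2 : z ≤ m * Real.exp (z / m) := by
    rw [div_le_iff₀ hmpos] at h1; linarith
  have h3 : z ^ m ≤ ((m : ℝ) * Real.exp (z / m)) ^ m :=
    pow_le_pow_left₀ hz h2 m
  have h4 : ((m:ℝ) * Real.exp (z / m)) ^ m = (m:ℝ)^m * Real.exp z := by
    rw [mul_pow, ← Real.exp_nat_mul]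
    congr 2
    field_simp
  calc z ^ m * Real.exp (-z)
      ≤ (m:ℝ)^m * Real.exp z * Real.exp (-z) := by
        apply mul_le_mul_of_nonneg_right _ (Real.exp_nonneg _)
        rw [← h4]; exact h3
    _ = (m:ℝ)^m := by rw [mul_assoc, ← Real.exp_add]; simp

/-- hypoelliptic bound
`|ξ(t)| (∫₀^t |ξ(r)| dr)ⁿ exp(-(σ²/2)∫₀^t |ξ(r)|² dr) ≤ Cₙ t^{(n-1)/2}/σ^{n+1}`,
where `ξ(r) = (ξ - k/λ)e^{-λr} + k/λ` and `Cₙ` depends only on `n` and `λ`. -/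
theorem stmt_8 (d : ℕ) (lam : ℝ) (hlam : 0 < lam) (n : ℕ) :
    ∃ C : ℝ, 0 < C ∧
      ∀ (sig t : ℝ), 0 < sig → 0 < t →
        ∀ (k ξ : EuclideanSpace ℝ (Fin d)) (Ξ : ℝ → EuclideanSpace ℝ (Fin d)),
          (∀ r, Ξ r = Real.exp (-lam * r) • (ξ - lam⁻¹ • k) + lam⁻¹ • k) →
          ‖Ξ t‖ * (∫ r in (0:ℝ)..t, ‖Ξ r‖) ^ n *
              Real.exp (-(sig ^ 2 / 2) * ∫ r in (0:ℝ)..t, ‖Ξ r‖ ^ 2)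
            ≤ C * t ^ (((n : ℝ) - 1) / 2) / sig ^ (n + 1) := by
  refine ⟨Real.sqrt (24 * ((n:ℝ)+1)^(n+1)), by positivity, ?_⟩
  intro sig t hsig ht k ξ Ξ hΞ
  have hΞc : Continuous Ξ := by
    have hfun : Ξ = fun r => Real.exp (-lam * r) • (ξ - lam⁻¹ • k) + lam⁻¹ • k := funext hΞ
    rw [hfun]; fun_prop
  have hfc : Continuous (fun r => ‖Ξ r‖) := hΞc.norm
  -- pointwise key inequality
  have hkey : ∀ r1 ∈ Set.Icc (0:ℝ) (t/3), ∀ r2 ∈ Set.Icc (2*t/3) t,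
      ‖Ξ t‖^2 ≤ 2 * (fun r => ‖Ξ r‖^2) r1 + 8 * (fun r => ‖Ξ r‖^2) r2 := by
    intro r1 hr1 r2 hr2
    simp only
    set w := Real.exp (-(lam*t)/3) with hw
    have hw0 : 0 < w := Real.exp_pos _
    have hw1 : w ≤ 1 := Real.exp_le_one_iff.mpr (by nlinarith)
    have h1 : w ≤ Real.exp (-lam * r1) := by
      apply Real.exp_le_exp.mpr
      nlinarith [hr1.2]
    have h2 : Real.exp (-lam * r2) ≤ w^2 := by
      rw [hw, ← Real.exp_nat_mul]
      apply Real.exp_le_exp.mpr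
      push_cast
      nlinarith [hr2.1]
    have h3 : Real.exp (-lam * t) = w^3 := by
      rw [hw, ← Real.exp_nat_mul]
      congr 1
      push_cast
      ring
    have hD : 0 < Real.exp (-lam * r1) - Real.exp (-lam * r2) := by
      have : Real.exp (-lam * r2) < Real.exp (-lam * r1) := by
        apply Real.exp_lt_exp.mpr; nlinarith [hr1.2, hr2.1]
      linarith
    have hct2 : Real.exp (-lam * t) ≤ Real.exp (-lam * r2) := by
      apply Real.exp_le_exp.mpr; nlinarith [hr2.2]
    have hct1 : Real.exp (-lam * t) ≤ Real.exp (-lam * r1) := by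
      apply Real.exp_le_exp.mpr; nlinarith [hr1.2]
    have hkey2 : 2 * Real.exp (-lam * r2) ≤ Real.exp (-lam * r1) + Real.exp (-lam * t) := by
      rw [h3]
      nlinarith [h1, h2, hw0, hw1, mul_nonneg (mul_nonneg hw0.le hw0.le) (sq_nonneg (1-w)),
        sq_nonneg (1-w)]
    have hid : (Real.exp (-lam * r1) - Real.exp (-lam * r2)) • Ξ t
        = (Real.exp (-lam * t) - Real.exp (-lam * r2)) • Ξ r1
          + (Real.exp (-lam * r1) - Real.exp (-lam * t)) • Ξ r2 := by
      rw [hΞ t, hΞ r1, hΞ r2]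
      module
    have hnorm : (Real.exp (-lam * r1) - Real.exp (-lam * r2)) * ‖Ξ t‖
        ≤ (Real.exp (-lam * r2) - Real.exp (-lam * t)) * ‖Ξ r1‖
          + (Real.exp (-lam * r1) - Real.exp (-lam * t)) * ‖Ξ r2‖ := by
      have hls : ‖(Real.exp (-lam * r1) - Real.exp (-lam * r2)) • Ξ t‖
          = (Real.exp (-lam * r1) - Real.exp (-lam * r2)) * ‖Ξ t‖ := by
        rw [norm_smul, Real.norm_eq_abs, abs_of_pos hD]
      have hrs : ‖(Real.exp (-lam * t) - Real.exp (-lam * r2)) • Ξ r1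
          + (Real.exp (-lam * r1) - Real.exp (-lam * t)) • Ξ r2‖
          ≤ (Real.exp (-lam * r2) - Real.exp (-lam * t)) * ‖Ξ r1‖
            + (Real.exp (-lam * r1) - Real.exp (-lam * t)) * ‖Ξ r2‖ := by
        refine (norm_add_le _ _).trans ?_
        rw [norm_smul, norm_smul, Real.norm_eq_abs, Real.norm_eq_abs,
          abs_sub_comm, abs_of_nonneg (by linarith), abs_of_nonneg (by linarith)]
      calc (Real.exp (-lam * r1) - Real.exp (-lam * r2)) * ‖Ξ t‖
          = ‖(Real.exp (-lam * r1) - Real.exp (-lam * r2)) • Ξ t‖ := hls.symm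
        _ = ‖(Real.exp (-lam * t) - Real.exp (-lam * r2)) • Ξ r1
            + (Real.exp (-lam * r1) - Real.exp (-lam * t)) • Ξ r2‖ := by rw [hid]
        _ ≤ _ := hrs
    have hNle : ‖Ξ t‖ ≤ ‖Ξ r1‖ + 2*‖Ξ r2‖ := by
      have h5 : (Real.exp (-lam * r1) - Real.exp (-lam * r2)) * ‖Ξ t‖
          ≤ (Real.exp (-lam * r1) - Real.exp (-lam * r2)) * (‖Ξ r1‖ + 2*‖Ξ r2‖) := by
        nlinarith [norm_nonneg (Ξ r1), norm_nonneg (Ξ r2), hkey2, hct2, hnorm]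
      exact le_of_mul_le_mul_left h5 hD
    nlinarith [norm_nonneg (Ξ r1), norm_nonneg (Ξ r2), hNle, norm_nonneg (Ξ t),
      sq_nonneg (‖Ξ r1‖ - 2*‖Ξ r2‖)]
  have hkey3 : t * ‖Ξ t‖^2 ≤ 24 * ∫ r in (0:ℝ)..t, ‖Ξ r‖^2 :=
    aux_avg (fun r => ‖Ξ r‖^2) (hfc.pow 2) (fun x => by positivity) t ht (‖Ξ t‖^2) hkey
  have hCS : (∫ r in (0:ℝ)..t, ‖Ξ r‖)^2 ≤ t * ∫ r in (0:ℝ)..t, ‖Ξ r‖^2 :=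
    aux_cs (fun r => ‖Ξ r‖) hfc (fun x => norm_nonneg _) t ht
  set N := ‖Ξ t‖ with hN
  set I1 := ∫ r in (0:ℝ)..t, ‖Ξ r‖ with hI1def
  set I2 := ∫ r in (0:ℝ)..t, ‖Ξ r‖ ^ 2 with hI2def
  have hI2nonneg : 0 ≤ I2 :=
    intervalIntegral.integral_nonneg ht.le (fun x _ => by positivity)
  have hI1nonneg : 0 ≤ I1 :=
    intervalIntegral.integral_nonneg ht.le (fun x _ => norm_nonneg _)
  rcases eq_or_lt_of_le hI2nonneg with hI20 | hI2pos
  · have hN0 : N = 0 := by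
      have h1 : N^2 ≤ 0 := by nlinarith [hkey3]
      nlinarith [sq_nonneg N, norm_nonneg (Ξ t)]
    rw [hN0]
    simp only [zero_mul]
    positivity
  set E := Real.exp (-(sig^2/2) * I2) with hE
  have hEpos : 0 < E := Real.exp_pos _
  have hNle : N ≤ Real.sqrt (24 * I2 / t) := by
    have h1 : N^2 ≤ 24 * I2 / t := by rw [le_div_iff₀ ht]; nlinarith [hkey3]
    calc N = Real.sqrt (N^2) := (Real.sqrt_sq (norm_nonneg _)).symm
      _ ≤ _ := Real.sqrt_le_sqrt h1
  have hI1le : I1^n ≤ Real.sqrt ((t*I2)^n) := by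
    calc I1^n = Real.sqrt ((I1^2)^n) := by
          rw [← pow_mul, mul_comm 2 n, pow_mul, Real.sqrt_sq (by positivity)]
      _ ≤ _ := Real.sqrt_le_sqrt (pow_le_pow_left₀ (sq_nonneg _) hCS n)
  have hstep1 : N * I1^n * E ≤ Real.sqrt (24*I2/t) * Real.sqrt ((t*I2)^n) * E := by
    have hnn : 0 ≤ N := norm_nonneg _
    have h1 : 0 ≤ I1^n := by positivity
    gcongr
  have hstep2 : Real.sqrt (24*I2/t) * Real.sqrt ((t*I2)^n) * E
      = Real.sqrt (24*I2/t * (t*I2)^n * (E*E)) := by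
    rw [Real.sqrt_mul (by positivity), Real.sqrt_mul (by positivity)]
    congr 1
    rw [Real.sqrt_mul_self hEpos.le]
  have haux := aux_pow_mul_exp_neg_le (n+1) (sig^2 * I2) (by positivity)
  have hEE : E * E = Real.exp (-(sig^2 * I2)) := by
    rw [hE, ← Real.exp_add]
    congr 1
    ring
  have hI2E : I2^(n+1) * (E*E) ≤ ((n:ℝ)+1)^(n+1) / sig^(2*(n+1)) := by
    rw [le_div_iff₀ (by positivity), hEE]
    calc I2^(n+1) * Real.exp (-(sig^2*I2)) * sig^(2*(n+1))
        = (sig^2*I2)^(n+1) * Real.exp (-(sig^2*I2)) := by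
          rw [mul_pow, pow_mul]; ring
      _ ≤ ((n:ℝ)+1)^(n+1) := by
          have hc : ((n+1:ℕ):ℝ) = (n:ℝ)+1 := by push_cast; ring
          rw [← hc]; exact haux
  have hsqarg : 24*I2/t * (t*I2)^n * (E*E)
      ≤ (24 * ((n:ℝ)+1)^(n+1)) * (t^n/t) / sig^(2*(n+1)) := by
    have hfl : 24*I2/t * (t*I2)^n * (E*E) = 24 * (t^n/t) * (I2^(n+1) * (E*E)) := by
      rw [mul_pow]; field_simp; ring
    rw [hfl]
    calc 24 * (t^n/t) * (I2^(n+1) * (E*E))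
        ≤ 24 * (t^n/t) * (((n:ℝ)+1)^(n+1) / sig^(2*(n+1))) := by
          apply mul_le_mul_of_nonneg_left hI2E (by positivity)
      _ = (24 * ((n:ℝ)+1)^(n+1)) * (t^n/t) / sig^(2*(n+1)) := by ring
  have hrpow : (t ^ (((n:ℝ)-1)/2))^2 = t^n / t := by
    rw [← Real.rpow_natCast (t ^ (((n:ℝ)-1)/2)) 2, ← Real.rpow_mul ht.le]
    have h2 : ((n:ℝ)-1)/2 * ((2:ℕ):ℝ) = (n:ℝ) - 1 := by push_cast; ring
    rw [h2, Real.rpow_sub ht, Real.rpow_natCast, Real.rpow_one]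
  have hRHS : (Real.sqrt (24 * ((n:ℝ)+1)^(n+1)) * t ^ (((n:ℝ)-1)/2) / sig^(n+1))^2
      = (24 * ((n:ℝ)+1)^(n+1)) * (t^n/t) / sig^(2*(n+1)) := by
    rw [div_pow, mul_pow, Real.sq_sqrt (by positivity), hrpow]
    congr 1
    rw [← pow_mul]
    ring_nf
  have hfinal : Real.sqrt (24*I2/t * (t*I2)^n * (E*E))
      ≤ Real.sqrt (24 * ((n:ℝ)+1)^(n+1)) * t ^ (((n:ℝ)-1)/2) / sig^(n+1) := by
    rw [show Real.sqrt (24 * ((n:ℝ)+1)^(n+1)) * t ^ (((n:ℝ)-1)/2) / sig^(n+1)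
        = Real.sqrt ((Real.sqrt (24 * ((n:ℝ)+1)^(n+1)) * t ^ (((n:ℝ)-1)/2) / sig^(n+1))^2) from
        (Real.sqrt_sq (by positivity)).symm]
    apply Real.sqrt_le_sqrt
    rw [hRHS]
    exact hsqarg
  calc N * I1^n * E ≤ Real.sqrt (24*I2/t) * Real.sqrt ((t*I2)^n) * E := hstep1
    _ = Real.sqrt (24*I2/t * (t*I2)^n * (E*E)) := hstep2
    _ ≤ _ := hfinal
end

section
/- Define g : (0,1) → ℝ by g(x) = (1−x)^{3/2} / ( (1+x)·(−2 log x − (1−x)(3−x)) )^{1/2}. Then g is nondecreasing on (0,1), g(x) → 0 as x → 0⁺, g(x) → √3/2 as x → 1⁻, and consequently g(x) ≤ √3/2 for all x ∈ (0,1). -/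
open Real Set Filter

/-- The function `g(x) = (1-x)^{3/2} / ((1+x)(-2 log x - (1-x)(3-x)))^{1/2}`. -/
noncomputable def gStmt9 (x : ℝ) : ℝ :=
  (1 - x) ^ ((3 : ℝ) / 2) / ((1 + x) * (-2 * Real.log x - (1 - x) * (3 - x))) ^ ((1 : ℝ) / 2)

noncomputable def Af (x : ℝ) : ℝ := -Real.log x - ((1-x) + (1-x)^2/2 + (1-x)^3/3)
noncomputable def Bf (x : ℝ) : ℝ := (1-x)^4/x - Af x
noncomputable def G1f (x : ℝ) : ℝ := -4*Real.log x - 8/x + 2/x^2 + 6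
noncomputable def Gf (x : ℝ) : ℝ := -(8+4*x)*Real.log x - 2/x + 10*x - 8

/-- generic: f' ≤ 0 on (0,1), f 1 = 0 ⇒ 0 ≤ f on (0,1]. -/
lemma nonneg_aux (f f' : ℝ → ℝ)
    (hd : ∀ x : ℝ, 0 < x → HasDerivAt f (f' x) x)
    (h0 : ∀ x : ℝ, 0 < x → x < 1 → f' x ≤ 0) (h1 : f 1 = 0)
    {x : ℝ} (hx : 0 < x) (hx1 : x ≤ 1) : 0 ≤ f x := by
  have hanti : AntitoneOn f (Ioc 0 1) := by
    apply antitoneOn_of_deriv_nonpos (convex_Ioc 0 1)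
    · intro y hy
      exact ((hd y hy.1).differentiableAt).continuousAt.continuousWithinAt
    · intro y hy
      rw [interior_Ioc] at hy
      exact ((hd y hy.1).differentiableAt).differentiableWithinAt
    · intro y hy
      rw [interior_Ioc] at hy
      rw [(hd y hy.1).deriv]
      exact h0 y hy.1 hy.2
  have := hanti ⟨hx, hx1⟩ (by norm_num : (1:ℝ) ∈ Ioc (0:ℝ) 1) hx1
  rw [h1] at this; exact this

/-- generic: f' ≥ 0 on (0,1), f 1 = 0 ⇒ f ≤ 0 on (0,1]. -/
lemma nonpos_aux (f f' : ℝ → ℝ)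
    (hd : ∀ x : ℝ, 0 < x → HasDerivAt f (f' x) x)
    (h0 : ∀ x : ℝ, 0 < x → x < 1 → 0 ≤ f' x) (h1 : f 1 = 0)
    {x : ℝ} (hx : 0 < x) (hx1 : x ≤ 1) : f x ≤ 0 := by
  have := nonneg_aux (fun y => -f y) (fun y => -f' y)
    (fun y hy => (hd y hy).neg) (fun y hy hy1 => by simpa using h0 y hy hy1)
    (by simp [h1]) hx hx1
  linarith [this]

lemma one_sub_deriv (x : ℝ) : HasDerivAt (fun x : ℝ => (1-x)) (-1) x := by
  simpa using (hasDerivAt_id x).const_sub 1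

lemma hAderiv {x : ℝ} (hx : 0 < x) : HasDerivAt Af (-(1-x)^3/x) x := by
  have h2 := one_sub_deriv x
  have h1 := ((Real.hasDerivAt_log (ne_of_gt hx)).neg).sub
    ((h2.add ((h2.pow 2).div_const 2)).add ((h2.pow 3).div_const 3))
  refine h1.congr_deriv ?_
  push_cast
  field_simp
  ring

lemma Af_nonneg {x : ℝ} (hx : 0 < x) (hx1 : x ≤ 1) : 0 ≤ Af x := by
  apply nonneg_aux Af (fun x => -(1-x)^3/x) (fun y hy => hAderiv hy) _ _ hx hx1
  · intro y hy hy1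
    have h1 : (0:ℝ) ≤ (1-y)^3 := pow_nonneg (by linarith) 3
    exact div_nonpos_of_nonpos_of_nonneg (by linarith) hy.le
  · simp [Af]

lemma hBderiv {x : ℝ} (hx : 0 < x) : HasDerivAt Bf (-(1-x)^3*(2*x+1)/x^2) x := by
  have h2 := one_sub_deriv x
  have h1 := (((h2.pow 4).div (hasDerivAt_id x) (ne_of_gt hx))).sub (hAderiv hx)
  refine h1.congr_deriv ?_
  simp only [id_eq, Pi.pow_apply]
  push_cast
  field_simp
  ring

lemma Bf_nonneg {x : ℝ} (hx : 0 < x) (hx1 : x ≤ 1) : 0 ≤ Bf x := by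
  apply nonneg_aux Bf (fun x => -(1-x)^3*(2*x+1)/x^2) (fun y hy => hBderiv hy) _ _ hx hx1
  · intro y hy hy1
    have h1 : (0:ℝ) ≤ (1-y)^3 := pow_nonneg (by linarith) 3
    apply div_nonpos_of_nonpos_of_nonneg _ (sq_nonneg y)
    nlinarith
  · simp [Bf, Af]

lemma hG1deriv {x : ℝ} (hx : 0 < x) : HasDerivAt G1f (-4*(x-1)^2/x^3) x := by
  have hlog := (Real.hasDerivAt_log (ne_of_gt hx)).const_mul (-4 : ℝ)
  have hinv := (hasDerivAt_inv (ne_of_gt hx)).const_mul (8 : ℝ)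
  have hx2 : HasDerivAt (fun x : ℝ => 2/x^2) (-(2*(2*x))/(x^2)^2) x := by
    refine ((hasDerivAt_const x (2:ℝ)).div ((hasDerivAt_id x).pow 2) (pow_ne_zero 2 (ne_of_gt hx))).congr_deriv ?_
    simp only [id_eq, Pi.pow_apply]
    ring
  have h := ((hlog.sub (by simpa [div_eq_mul_inv] using hinv)).add hx2).add_const 6
  refine h.congr_deriv ?_
  field_simp
  ring

lemma G1f_nonneg {x : ℝ} (hx : 0 < x) (hx1 : x ≤ 1) : 0 ≤ G1f x := by
  apply nonneg_aux G1f (fun x => -4*(x-1)^2/x^3) (fun y hy => hG1deriv hy) _ _ hx hx1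
  · intro y hy hy1
    apply div_nonpos_of_nonpos_of_nonneg _ (by positivity)
    nlinarith [sq_nonneg (y-1)]
  · simp [G1f]; norm_num

lemma hGderiv {x : ℝ} (hx : 0 < x) : HasDerivAt Gf (G1f x) x := by
  have hlog : HasDerivAt (fun x : ℝ => -(8+4*x)*Real.log x)
      ((-4) * Real.log x + (-(8+4*x)) * x⁻¹) x := by
    have h1 : HasDerivAt (fun x : ℝ => -(8+4*x)) (-4) x := by
      exact (by simpa using ((hasDerivAt_id x).const_mul (4:ℝ)).const_add 8 : HasDerivAt (fun x : ℝ => 8+4*x) 4 x).neg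
    exact h1.mul (Real.hasDerivAt_log (ne_of_gt hx))
  have hinv : HasDerivAt (fun x : ℝ => 2/x) (-(2/x^2)) x := by
    simpa [div_eq_mul_inv, sq] using (hasDerivAt_inv (ne_of_gt hx)).const_mul (2 : ℝ)
  have h := ((hlog.sub hinv).add ((hasDerivAt_id x).const_mul 10)).sub_const 8
  refine h.congr_deriv ?_
  unfold G1f
  field_simp
  ring

lemma Gf_nonpos {x : ℝ} (hx : 0 < x) (hx1 : x ≤ 1) : Gf x ≤ 0 := by
  apply nonpos_aux Gf G1f (fun y hy => hGderiv hy) _ _ hx hx1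
  · intro y hy hy1
    exact G1f_nonneg hy hy1.le
  · simp [Gf]; norm_num

noncomputable def Df (x : ℝ) : ℝ := -2*Real.log x - (1-x)*(3-x)
noncomputable def Nf (x : ℝ) : ℝ := (1+x) * Df x
noncomputable def Ff (x : ℝ) : ℝ := Nf x / (1-x)^3

lemma Df_eq (x : ℝ) : Df x = 2*Af x + (2/3)*(1-x)^3 := by
  unfold Df Af; ring

lemma Df_ge {x : ℝ} (hx : 0 < x) (hx1 : x ≤ 1) : (2/3)*(1-x)^3 ≤ Df x := by
  rw [Df_eq]; linarith [Af_nonneg hx hx1]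

lemma Df_le {x : ℝ} (hx : 0 < x) (hx1 : x ≤ 1) :
    Df x ≤ (2/3)*(1-x)^3 + 2*((1-x)^4/x) := by
  have hB := Bf_nonneg hx hx1
  unfold Bf at hB
  rw [Df_eq]; linarith

lemma Df_pos {x : ℝ} (hx : 0 < x) (hx1 : x < 1) : 0 < Df x := by
  have := Df_ge hx hx1.le
  nlinarith [pow_pos (by linarith : (0:ℝ) < 1 - x) 3]

lemma Nf_pos {x : ℝ} (hx : 0 < x) (hx1 : x < 1) : 0 < Nf x :=
  mul_pos (by linarith) (Df_pos hx hx1)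

lemma hDderiv {x : ℝ} (hx : 0 < x) : HasDerivAt Df (-2/x + 4 - 2*x) x := by
  have hlog := (Real.hasDerivAt_log (ne_of_gt hx)).const_mul (-2 : ℝ)
  have h2 := (one_sub_deriv x).mul ((hasDerivAt_id x).const_sub 3)
  have h := hlog.sub h2
  refine h.congr_deriv ?_
  simp only [id_eq]
  field_simp
  ring

lemma hNderiv {x : ℝ} (hx : 0 < x) :
    HasDerivAt Nf (Df x + (1+x)*(-2/x + 4 - 2*x)) x := by
  have h1 : HasDerivAt (fun x : ℝ => 1 + x) 1 x := by
    simpa using (hasDerivAt_id x).const_add 1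
  have h := h1.mul (hDderiv hx)
  refine h.congr_deriv ?_
  ring

lemma hFderiv {x : ℝ} (hx : 0 < x) (hx1 : x < 1) :
    HasDerivAt Ff (Gf x / (1-x)^4) x := by
  have hne : (1-x)^3 ≠ 0 := by
    have : (0:ℝ) < 1 - x := by linarith
    positivity
  have h := (hNderiv hx).div ((one_sub_deriv x).pow 3) hne
  refine h.congr_deriv ?_
  simp only [Pi.pow_apply]
  unfold Nf Df Gf
  have hx0 : x ≠ 0 := ne_of_gt hx
  have h1 : (1:ℝ) - x ≠ 0 := by intro h; nlinarith [h]
  push_cast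
  field_simp
  ring

lemma Ff_anti : AntitoneOn Ff (Ioo 0 1) := by
  apply antitoneOn_of_deriv_nonpos (convex_Ioo 0 1)
  · intro y hy
    exact ((hFderiv hy.1 hy.2).differentiableAt).continuousAt.continuousWithinAt
  · intro y hy
    rw [interior_Ioo] at hy
    exact ((hFderiv hy.1 hy.2).differentiableAt).differentiableWithinAt
  · intro y hy
    rw [interior_Ioo] at hy
    rw [(hFderiv hy.1 hy.2).deriv]
    apply div_nonpos_of_nonpos_of_nonneg (Gf_nonpos hy.1 hy.2.le)
    positivity

lemma gStmt9_eq {x : ℝ} (hx1 : x ≤ 1) :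
    gStmt9 x = Real.sqrt ((1-x)^3) / Real.sqrt (Nf x) := by
  unfold gStmt9 Nf Df
  rw [← Real.sqrt_eq_rpow]
  congr 1
  rw [show ((3:ℝ)/2) = (3:ℝ) * (1/2) by norm_num,
    Real.rpow_mul (by linarith : (0:ℝ) ≤ 1 - x), ← Real.sqrt_eq_rpow]
  congr 1
  rw [show ((3:ℝ)) = ((3:ℕ):ℝ) by norm_num, Real.rpow_natCast]

lemma gStmt9_eq' {x : ℝ} (hx1 : x ≤ 1) :
    gStmt9 x = Real.sqrt ((1-x)^3 / Nf x) := by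
  rw [gStmt9_eq hx1, Real.sqrt_div (pow_nonneg (by linarith) 3)]

lemma g_mono : MonotoneOn gStmt9 (Ioo 0 1) := by
  intro x hx y hy hxy
  rw [gStmt9_eq' hx.2.le, gStmt9_eq' hy.2.le]
  apply Real.sqrt_le_sqrt
  have hFyx := Ff_anti hx hy hxy
  have hy1 : (0:ℝ) < 1 - y := by linarith [hy.2]
  have hFy : 0 < Ff y := div_pos (Nf_pos hy.1 hy.2) (by positivity)
  have e1 : (1-x)^3 / Nf x = 1 / Ff x := by unfold Ff; rw [one_div_div]
  have e2 : (1-y)^3 / Nf y = 1 / Ff y := by unfold Ff; rw [one_div_div]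
  rw [e1, e2]
  exact one_div_le_one_div_of_le hFy hFyx

lemma g_lim0 : Tendsto gStmt9 (nhdsWithin 0 (Ioi 0)) (nhds 0) := by
  have hmem : Ioo (0:ℝ) 1 ∈ nhdsWithin (0:ℝ) (Ioi 0) :=
    Ioo_mem_nhdsGT_of_mem ⟨le_refl 0, zero_lt_one⟩
  have heq : (fun x : ℝ => Real.sqrt ((1-x)^3) / Real.sqrt (Nf x)) =ᶠ[nhdsWithin 0 (Ioi 0)] gStmt9 := by
    filter_upwards [hmem] with x hx
    exact (gStmt9_eq hx.2.le).symm
  apply Tendsto.congr' heq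
  apply Tendsto.div_atTop (a := Real.sqrt 1)
  · apply Tendsto.mono_left _ nhdsWithin_le_nhds
    have hc : Continuous (fun x : ℝ => Real.sqrt ((1-x)^3)) := by fun_prop
    simpa using hc.tendsto 0
  · have hsq : Tendsto Real.sqrt atTop atTop := by
      rw [show Real.sqrt = fun x : ℝ => x ^ ((1:ℝ)/2) from funext fun x => Real.sqrt_eq_rpow x]
      exact tendsto_rpow_atTop (by norm_num)
    apply hsq.comp
    have hD : Tendsto Df (nhdsWithin 0 (Ioi 0)) atTop := by
      unfold Df
      have h1 : Tendsto (fun x : ℝ => -2*Real.log x) (nhdsWithin 0 (Ioi 0)) atTop := by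
        have := Real.tendsto_log_nhdsGT_zero
        have h2 : Tendsto (fun x : ℝ => -Real.log x) (nhdsWithin 0 (Ioi 0)) atTop :=
          tendsto_neg_atBot_atTop.comp this
        have := h2.const_mul_atTop (by norm_num : (0:ℝ) < 2)
        convert this using 2 with x
        ring
      have h2 : Tendsto (fun x : ℝ => -((1-x)*(3-x))) (nhdsWithin 0 (Ioi 0)) (nhds (-3)) := by
        apply Tendsto.mono_left _ nhdsWithin_le_nhds
        have hc : Continuous (fun x : ℝ => -((1-x)*(3-x))) := by fun_prop
        simpa using hc.tendsto 0
      have := h1.atTop_add h2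
      convert this using 2 with x
      try ring
    have h3 : Tendsto (fun x : ℝ => 1 + x) (nhdsWithin 0 (Ioi 0)) (nhds 1) := by
      apply Tendsto.mono_left _ nhdsWithin_le_nhds
      have hc : Continuous (fun x : ℝ => 1 + x) := by fun_prop
      simpa using hc.tendsto 0
    exact h3.pos_mul_atTop one_pos hD

lemma r_bounds {x : ℝ} (hx : 0 < x) (hx1 : x < 1) :
    1/((1+x)*(2/3 + 2*((1-x)/x))) ≤ (1-x)^3 / Nf x ∧
    (1-x)^3 / Nf x ≤ 1/((1+x)*(2/3)) := by
  have ht : (0:ℝ) < 1 - x := by linarith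
  have hDpos := Df_pos hx hx1
  have hNpos := Nf_pos hx hx1
  have h1x : (0:ℝ) < 1 + x := by linarith
  have hge := Df_ge hx hx1.le
  have hle := Df_le hx hx1.le
  constructor
  · rw [div_le_div_iff₀ (by positivity) hNpos]
    have e : (1-x)^3 * ((1-x)/x) = (1-x)^4/x := by
      field_simp
    unfold Nf
    nlinarith [pow_pos ht 3, mul_pos hx ht]
  · rw [div_le_div_iff₀ hNpos (by positivity)]
    unfold Nf
    nlinarith [pow_pos ht 3]

lemma r_lim : Tendsto (fun x : ℝ => (1-x)^3 / Nf x) (nhdsWithin 1 (Iio 1)) (nhds (3/4)) := by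
  have hmem : Ioo (0:ℝ) 1 ∈ nhdsWithin (1:ℝ) (Iio 1) :=
    Ioo_mem_nhdsLT_of_mem ⟨zero_lt_one, le_refl 1⟩
  have hl : Tendsto (fun x : ℝ => 1/((1+x)*(2/3 + 2*((1-x)/x)))) (nhdsWithin 1 (Iio 1)) (nhds (3/4)) := by
    have hc : ContinuousAt (fun x : ℝ => 1/((1+x)*(2/3 + 2*((1-x)/x)))) 1 := by
      apply ContinuousAt.div continuousAt_const
      · apply ContinuousAt.mul (by fun_prop)
        apply ContinuousAt.add continuousAt_const
        apply ContinuousAt.mul continuousAt_const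
        exact ContinuousAt.div (by fun_prop) continuousAt_id one_ne_zero
      · norm_num
    have := hc.tendsto.mono_left (nhdsWithin_le_nhds (s := Iio 1))
    convert this using 2
    norm_num
  have hu : Tendsto (fun x : ℝ => 1/((1+x)*(2/3))) (nhdsWithin 1 (Iio 1)) (nhds (3/4)) := by
    have hc : ContinuousAt (fun x : ℝ => 1/((1+x)*(2/3))) 1 := by
      apply ContinuousAt.div continuousAt_const (by fun_prop) (by norm_num)
    have := hc.tendsto.mono_left (nhdsWithin_le_nhds (s := Iio 1))
    convert this using 2
    norm_num
  apply tendsto_of_tendsto_of_tendsto_of_le_of_le' hl hu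
  · filter_upwards [hmem] with x hx
    exact (r_bounds hx.1 hx.2).1
  · filter_upwards [hmem] with x hx
    exact (r_bounds hx.1 hx.2).2

lemma g_lim1 : Tendsto gStmt9 (nhdsWithin 1 (Iio 1)) (nhds (Real.sqrt 3 / 2)) := by
  have hmem : Ioo (0:ℝ) 1 ∈ nhdsWithin (1:ℝ) (Iio 1) :=
    Ioo_mem_nhdsLT_of_mem ⟨zero_lt_one, le_refl 1⟩
  have heq : (fun x : ℝ => Real.sqrt ((1-x)^3 / Nf x)) =ᶠ[nhdsWithin 1 (Iio 1)] gStmt9 := by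
    filter_upwards [hmem] with x hx
    exact (gStmt9_eq' hx.2.le).symm
  apply Tendsto.congr' heq
  have h := (Real.continuous_sqrt.tendsto (3/4)).comp r_lim
  convert h using 1
  · rfl
  have h4 : Real.sqrt 4 = 2 := by
    rw [show (4:ℝ) = 2^2 by norm_num, Real.sqrt_sq (by norm_num : (0:ℝ) ≤ 2)]
  rw [show (3:ℝ)/4 = 3/4 by norm_num, Real.sqrt_div (by norm_num : (0:ℝ) ≤ 3), h4]

/-- `g` is nondecreasing on `(0,1)`, tends to `0` at `0⁺`, tends to `√3/2`
at `1⁻`, and consequently `g ≤ √3/2` on `(0,1)`. -/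
theorem stmt_9 :
    MonotoneOn gStmt9 (Ioo 0 1) ∧
    Tendsto gStmt9 (nhdsWithin 0 (Ioi 0)) (nhds 0) ∧
    Tendsto gStmt9 (nhdsWithin 1 (Iio 1)) (nhds (Real.sqrt 3 / 2)) ∧
    ∀ x ∈ Ioo (0:ℝ) 1, gStmt9 x ≤ Real.sqrt 3 / 2 := by
  refine ⟨g_mono, g_lim0, g_lim1, ?_⟩
  intro x hx
  apply ge_of_tendsto g_lim1
  filter_upwards [Ioo_mem_nhdsLT_of_mem (⟨hx.2, le_refl 1⟩ : (1:ℝ) ∈ Ioc x 1)] with y hy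
  exact g_mono hx ⟨lt_trans hx.1 hy.1, hy.2⟩ hy.1.le
end

section
/- Define h : (0,1] → ℝ by h(x) = (1−x)(1+5x)/(2x(x+2)) + log x. Then h'(x) = −(1−x)³/(x²(x+2)²) for x ∈ (0,1), h(1) = 0, and hence h(x) ≥ 0 for all x ∈ (0,1]. -/
open Real Set

lemma stmt_10_deriv (x : ℝ) (hx : 0 < x) :
    HasDerivAt (fun y : ℝ => (1 - y) * (1 + 5 * y) / (2 * y * (y + 2)) + Real.log y)
      (-(1 - x) ^ 3 / (x ^ 2 * (x + 2) ^ 2)) x := by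
  have hx0 : x ≠ 0 := ne_of_gt hx
  have hx2 : x + 2 ≠ 0 := by positivity
  have hden : 2 * x * (x + 2) ≠ 0 := by positivity
  have hA : HasDerivAt (fun y : ℝ => 1 - y) (-1) x := by
    simpa using (hasDerivAt_id x).const_sub 1
  have hB : HasDerivAt (fun y : ℝ => 1 + 5 * y) 5 x := by
    simpa using ((hasDerivAt_id x).const_mul 5).const_add 1
  have hu := hA.mul hB
  have hC : HasDerivAt (fun y : ℝ => 2 * y) 2 x := by
    simpa using (hasDerivAt_id x).const_mul 2
  have hD : HasDerivAt (fun y : ℝ => y + 2) 1 x := by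
    simpa using (hasDerivAt_id x).add_const 2
  have hv := hC.mul hD
  have hq := hu.div hv hden
  have hlog := Real.hasDerivAt_log hx0
  have h := hq.add hlog
  convert h using 1
  · rfl
  · rfl
  · rfl
  simp only [Pi.mul_apply]
  field_simp
  ring

/-- for `h(x) = (1-x)(1+5x)/(2x(x+2)) + log x` one has
`h'(x) = -(1-x)³/(x²(x+2)²)` on `(0,1)`, `h(1) = 0`, and `h ≥ 0` on `(0,1]`. -/
theorem stmt_10 :
    (∀ x ∈ Ioo (0:ℝ) 1,
      HasDerivAt (fun y : ℝ => (1 - y) * (1 + 5 * y) / (2 * y * (y + 2)) + Real.log y)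
        (-(1 - x) ^ 3 / (x ^ 2 * (x + 2) ^ 2)) x) ∧
    ((1 - 1) * (1 + 5 * 1) / (2 * 1 * (1 + 2)) + Real.log 1 = 0) ∧
    (∀ x ∈ Ioc (0:ℝ) 1,
      0 ≤ (1 - x) * (1 + 5 * x) / (2 * x * (x + 2)) + Real.log x) := by
  set h : ℝ → ℝ := fun y : ℝ => (1 - y) * (1 + 5 * y) / (2 * y * (y + 2)) + Real.log y with hh
  have h1 : h 1 = 0 := by simp [hh]
  refine ⟨fun x hx => stmt_10_deriv x hx.1, by simpa [hh] using h1, ?_⟩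
  intro x hx
  rcases eq_or_lt_of_le hx.2 with heq | hlt
  · subst heq; simpa [hh] using h1.ge
  · have hcont : ContinuousOn h (Icc x 1) := fun y hy =>
      (stmt_10_deriv y (lt_of_lt_of_le hx.1 hy.1)).continuousAt.continuousWithinAt
    obtain ⟨c, hc, hceq⟩ := exists_hasDerivAt_eq_slope h
      (fun y => -(1 - y) ^ 3 / (y ^ 2 * (y + 2) ^ 2)) hlt hcont
      (fun y hy => stmt_10_deriv y (hx.1.trans hy.1))
    have hc1 : c < 1 := hc.2
    have hc0 : 0 < c := hx.1.trans hc.1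
    have hle : -(1 - c) ^ 3 / (c ^ 2 * (c + 2) ^ 2) ≤ 0 := by
      apply div_nonpos_of_nonpos_of_nonneg
      · nlinarith [pow_nonneg (by linarith : (0:ℝ) ≤ 1 - c) 3]
      · positivity
    rw [hceq] at hle
    have hx1 : 0 < 1 - x := by linarith
    have := div_nonpos_iff.mp hle
    have hH : h 1 - h x ≤ 0 := by
      rcases this with ⟨h1', h2'⟩ | ⟨h1', h2'⟩
      · linarith
      · exact h1'
    have : 0 ≤ h x := by rw [h1] at hH; linarith
    simpa [hh] using this
end
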